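/- For every integer m ≥ 1 and every real t > 0, the probability that the adversary tree reaches depth m by time t satisfies P(D_0(t) ≥ m) = P(S*_m ≤ t) ≤ (e·λ_a·t/m)^m. -/

import Mathlib

open MeasureTheory ProbabilityTheory Filter

namespace BRW

/-- Vertices at level `k + 1` of the infinite tree: tuples `(i_1, …, i_{k+1})`
of positive integers. -/
abbrev Vertex (k : ℕ) := Fin (k + 1) → ℕ+

/-- All vertices of the infinite tree (levels `1, 2, …`). -/
abbrev VertexAll := Σ k : ℕ, Vertex k

/-- The tuple `(v_1, …, v_j, l)`: the `l`-th sibling of the ancestor of `v` at level `j + 1`. -/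
def sibling {k : ℕ} (v : Vertex k) (j : Fin (k + 1)) (l : ℕ+) : Vertex j.val :=
  fun a => if h : (a : ℕ) < (j : ℕ) then v ⟨a, h.trans j.isLt⟩ else l

/-- The appearance time `S_v = ∑_{j ≤ k} W_{v^j}` of a vertex `v`, where
`W_{v^j} = ∑_{l ≤ i_j} E_{(i_1, …, i_{j-1}, l)}`. -/
noncomputable def S {Ω : Type*} (E : VertexAll → Ω → ℝ) {k : ℕ} (v : Vertex k) (ω : Ω) : ℝ :=
  ∑ j : Fin (k + 1), ∑ l ∈ Finset.range (v j : ℕ),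
    E ⟨j.val, sibling v j ⟨l + 1, l.succ_pos⟩⟩ ω

/-- `S*_m`: the first time the adversary tree reaches depth `m` (with `S*_0 = 0`). -/
noncomputable def Sstar {Ω : Type*} (E : VertexAll → Ω → ℝ) : ℕ → Ω → ℝ
  | 0 => fun _ => 0
  | (k + 1) => fun ω => ⨅ v : Vertex k, S E v ω

/-- `D_0(t)`: the depth of the adversary tree at time `t`. -/
noncomputable def D0 {Ω : Type*} (E : VertexAll → Ω → ℝ) (t : ℝ) (ω : Ω) : ℕ :=
  sSup {m : ℕ | Sstar E m ω ≤ t}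

end BRW

open BRW

open Real Set
open scoped NNReal ENNReal

namespace BRWAux


/-! ### Exponential measure integrals -/

lemma exponentialPDFReal_eq' (r x : ℝ) :
    exponentialPDFReal r x = if 0 ≤ x then r * exp (-(r * x)) else 0 := by
  rw [exponentialPDFReal, gammaPDFReal]
  simp only [rpow_one, Gamma_one, div_one, sub_self, rpow_zero, mul_one]

lemma expMeasure_eq (r : ℝ) :
    expMeasure r = MeasureTheory.volume.withDensity
      (fun x => ((Real.toNNReal (exponentialPDFReal r x) : ℝ≥0) : ℝ≥0∞)) := rfl

lemma expMeasure_eq'' (r : ℝ) :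
    expMeasure r = MeasureTheory.volume.withDensity (exponentialPDF r) := rfl

lemma key_indicator {r c : ℝ} (x : ℝ) :
    exponentialPDFReal r x * exp (c * x) = Set.indicator (Ici (0:ℝ))
      (fun y => r * exp ((c - r) * y)) x := by
  rw [exponentialPDFReal_eq']
  by_cases h : (0:ℝ) ≤ x
  · simp only [Set.indicator, mem_Ici, if_pos h, mul_assoc, ← Real.exp_add]
    ring_nf
  · simp only [Set.indicator, mem_Ici, if_neg h, zero_mul]

lemma integrable_indicator_key {r c : ℝ} (hc : c < r) :
    Integrable (Set.indicator (Ici (0:ℝ)) (fun y => r * exp ((c - r) * y))) := by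
  refine (IntegrableOn.integrable_indicator ?_ measurableSet_Ici)
  rw [integrableOn_Ici_iff_integrableOn_Ioi]
  have h := (exp_neg_integrableOn_Ioi 0 (by linarith : (0:ℝ) < r - c)).const_mul r
  simpa [neg_mul, neg_sub, IntegrableOn] using h

lemma smul_eq_indicator {r c : ℝ} (hr : 0 < r) : ∀ x : ℝ,
    (Real.toNNReal (exponentialPDFReal r x) : ℝ≥0) • exp (c * x)
      = Set.indicator (Ici (0:ℝ)) (fun y => r * exp ((c - r) * y)) x := by
  intro x
  rw [NNReal.smul_def, smul_eq_mul, Real.coe_toNNReal _ (exponentialPDFReal_nonneg hr x)]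
  exact key_indicator x

lemma integral_exp_mul_expMeasure {r c : ℝ} (hr : 0 < r) (hc : c < 0) :
    (∫ x, exp (c * x) ∂(expMeasure r)) = r / (r - c) := by
  rw [expMeasure_eq, integral_withDensity_eq_integral_smul
    ((measurable_exponentialPDFReal r).real_toNNReal) _]
  simp only [smul_eq_indicator hr]
  rw [integral_indicator measurableSet_Ici, integral_Ici_eq_integral_Ioi, integral_const_mul]
  have h2 : ∀ x ∈ Ioi (0:ℝ), exp ((c - r) * x) = (fun y => exp (-y)) ((r - c) * x) := by
    intro x _; simp only [neg_mul]; ring_nf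
  rw [setIntegral_congr_fun measurableSet_Ioi h2,
    integral_comp_mul_left_Ioi (fun y => exp (-y)) 0 (by linarith : (0:ℝ) < r - c)]
  simp [integral_exp_neg_Ioi, integral_exp_Iic_zero, div_eq_mul_inv]

lemma integrable_exp_mul_expMeasure {r c : ℝ} (hr : 0 < r) (hc : c < 0) :
    Integrable (fun x => exp (c * x)) (expMeasure r) := by
  rw [expMeasure_eq, integrable_withDensity_iff_integrable_smul
    ((measurable_exponentialPDFReal r).real_toNNReal)]
  have := integrable_indicator_key (r := r) (c := c) (by linarith)
  apply this.congr
  filter_upwards with x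
  exact (smul_eq_indicator hr x).symm



def idxMap {k : ℕ} (v : Vertex k) (p : (j : Fin (k+1)) × ℕ) : VertexAll :=
  ⟨p.1.val, sibling v p.1 ⟨p.2 + 1, p.2.succ_pos⟩⟩

lemma idxMap_injective {k : ℕ} (v : Vertex k) : Function.Injective (idxMap v) := by
  rintro ⟨j, l⟩ ⟨j', l'⟩ h
  simp only [idxMap] at h
  injection h with h1 h2
  have hj : j = j' := Fin.ext h1
  subst hj
  have h3 : sibling v j ⟨l+1, l.succ_pos⟩ = sibling v j ⟨l'+1, l'.succ_pos⟩ := eq_of_heq h2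
  have h4 := congrFun h3 ⟨j.val, Nat.lt_succ_self _⟩
  simp only [sibling, lt_irrefl, lt_self_iff_false, dite_false, dif_neg, not_false_iff] at h4
  have : l + 1 = l' + 1 := by simpa using congrArg PNat.val h4
  simp [Nat.succ_injective this]

def vFinset {k : ℕ} (v : Vertex k) : Finset VertexAll :=
  ((Finset.univ : Finset (Fin (k+1))).sigma fun j => Finset.range (v j : ℕ)).image (idxMap v)

lemma S_eq {Ω : Type*} (E : VertexAll → Ω → ℝ) {k : ℕ} (v : Vertex k) (ω : Ω) :
    S E v ω = ∑ u ∈ vFinset v, E u ω := by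
  rw [vFinset, Finset.sum_image (fun a _ b _ h => idxMap_injective v h), Finset.sum_sigma]
  rfl

lemma card_vFinset {k : ℕ} (v : Vertex k) : (vFinset v).card = ∑ j, (v j : ℕ) := by
  rw [vFinset, Finset.card_image_of_injective _ (idxMap_injective v), Finset.card_sigma]
  simp

/-! ### tsum computations -/

lemma tsum_pnat_pow (x : ℝ≥0∞) : ∑' n : ℕ+, x ^ (n : ℕ) = x * (1 - x)⁻¹ := by
  rw [← Equiv.pnatEquivNat.symm.tsum_eq (fun n : ℕ+ => x ^ (n:ℕ))]
  have : ∀ n : ℕ, ((Equiv.pnatEquivNat.symm n : ℕ+) : ℕ) = n + 1 := by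
    intro n; simp [Equiv.pnatEquivNat, Nat.succPNat]
  simp_rw [this]
  exact ENNReal.tsum_geometric_add_one x

lemma tsum_pi_pow (x : ℝ≥0∞) : ∀ m : ℕ,
    ∑' v : Fin m → ℕ+, ∏ j, x ^ ((v j : ℕ)) = (∑' n : ℕ+, x ^ ((n:ℕ))) ^ m := by
  intro m
  induction m with
  | zero =>
    rw [tsum_eq_single (fun _ => 1) (fun b hb => absurd (Subsingleton.elim b _) hb)]
    simp
  | succ m ih =>
    rw [← ((Fin.consEquiv (fun _ : Fin (m+1) => ℕ+)).tsum_eq (fun v : Fin (m+1) → ℕ+ => ∏ j, x ^ ((v j : ℕ)))),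
      ENNReal.tsum_prod']
    have h1 : ∀ (a : ℕ+) (f : Fin m → ℕ+),
        (∏ j, x ^ ((((Fin.consEquiv (fun _ : Fin (m+1) => ℕ+)) (a, f)) j : ℕ))) =
          x ^ (a : ℕ) * ∏ j, x ^ ((f j : ℕ)) := by
      intro a f
      rw [Fin.prod_univ_succ]
      simp [Fin.consEquiv]
    simp_rw [h1, ENNReal.tsum_mul_left, ENNReal.tsum_mul_right, ih]
    ring



lemma S_nonneg {Ω : Type*} (E : VertexAll → Ω → ℝ) {k : ℕ} (v : Vertex k) {ω : Ω}
    (hE : ∀ u, 0 ≤ E u ω) : 0 ≤ S E v ω :=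
  Finset.sum_nonneg fun _ _ => Finset.sum_nonneg fun _ _ => hE _

lemma sibling_castSucc {k : ℕ} (v : Vertex (k+1)) (j : Fin (k+1)) (L : ℕ+) :
    sibling v j.castSucc L = sibling (fun a => v a.castSucc) j L := by
  funext a
  simp only [sibling, Fin.coe_castSucc]
  split_ifs with h
  · exact congrArg v (Fin.ext rfl)
  · rfl

lemma S_restrict_le {Ω : Type*} (E : VertexAll → Ω → ℝ) {k : ℕ} (v : Vertex (k+1)) {ω : Ω}
    (hE : ∀ u, 0 ≤ E u ω) :
    S E (fun a => v a.castSucc) ω ≤ S E v ω := by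
  rw [S, S]
  conv_rhs => rw [Fin.sum_univ_castSucc]
  have heq : ∀ j : Fin (k+1),
      (∑ l ∈ Finset.range (v j.castSucc : ℕ),
        E ⟨(j.castSucc).val, sibling v j.castSucc ⟨l + 1, l.succ_pos⟩⟩ ω)
      = ∑ l ∈ Finset.range ((fun a => v a.castSucc) j : ℕ),
        E ⟨j.val, sibling (fun a => v a.castSucc) j ⟨l + 1, l.succ_pos⟩⟩ ω := by
    intro j
    refine Finset.sum_congr rfl fun l _ => ?_
    congr 1
  rw [Finset.sum_congr rfl fun j _ => heq j]
  have h0 : 0 ≤ ∑ l ∈ Finset.range (v (Fin.last (k+1)) : ℕ),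
      E ⟨(Fin.last (k+1)).val, sibling v (Fin.last (k+1)) ⟨l + 1, l.succ_pos⟩⟩ ω :=
    Finset.sum_nonneg fun _ _ => hE _
  linarith

lemma sstar_mono {Ω : Type*} (E : VertexAll → Ω → ℝ) {ω : Ω} (hE : ∀ u, 0 ≤ E u ω) :
    Monotone (fun n => Sstar E n ω) := by
  apply monotone_nat_of_le_succ
  intro n
  cases n with
  | zero =>
    show Sstar E 0 ω ≤ Sstar E 1 ω
    simp only [Sstar]
    exact le_ciInf fun v => S_nonneg E v hE
  | succ j =>
    show Sstar E (j+1) ω ≤ Sstar E (j+2) ω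
    simp only [Sstar]
    refine le_ciInf fun v => ?_
    have h1 : (⨅ w : Vertex j, S E w ω) ≤ S E (fun a => v a.castSucc) ω :=
      ciInf_le ⟨0, by rintro y ⟨w, rfl⟩; exact S_nonneg E w hE⟩ _
    exact h1.trans (S_restrict_le E v hE)


variable {Ω : Type*} [MeasurableSpace Ω]

lemma vertex_bound (P : Measure Ω) [IsProbabilityMeasure P]
    {la θ : ℝ} (hla : 0 < la) (hθ : 0 < θ)
    (E : VertexAll → Ω → ℝ) (hmeas : ∀ u, Measurable (E u))
    (hdist : ∀ u, P.map (E u) = expMeasure la)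
    (hindep : iIndepFun E P)
    {k : ℕ} (v : Vertex k) (t' : ℝ) :
    P {ω | S E v ω ≤ t'} ≤
      ENNReal.ofReal (Real.exp (θ * t') * (la / (la + θ)) ^ (∑ j, (v j : ℕ))) := by
  have hθneg : -θ < 0 := by linarith
  have hsm : ∀ u : VertexAll, AEStronglyMeasurable (fun x : ℝ => Real.exp (-θ * x)) (P.map (E u)) :=
    fun u => Measurable.aestronglyMeasurable (by fun_prop)
  have hint : ∀ u : VertexAll, Integrable (fun ω => Real.exp (-θ * E u ω)) P := by
    intro u
    have h1 : Integrable (fun x => Real.exp (-θ * x)) (P.map (E u)) := by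
      rw [hdist u]; exact integrable_exp_mul_expMeasure hla hθneg
    exact (integrable_map_measure (hsm u) (hmeas u).aemeasurable).mp h1
  have hmgf : ∀ u : VertexAll, mgf (E u) P (-θ) = la / (la + θ) := by
    intro u
    have h1 : mgf (E u) P (-θ) = ∫ x, Real.exp (-θ * x) ∂(P.map (E u)) :=
      (integral_map (hmeas u).aemeasurable (hsm u)).symm
    rw [h1, hdist u, integral_exp_mul_expMeasure hla hθneg, sub_neg_eq_add]
  have hsetEq : {ω | S E v ω ≤ t'} = {ω | (∑ u ∈ vFinset v, E u) ω ≤ t'} := by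
    ext ω; simp [S_eq E v ω, Finset.sum_apply]
  have hcher := measure_le_le_exp_mul_mgf (μ := P) (X := ∑ u ∈ vFinset v, E u) t'
      (neg_nonpos.mpr hθ.le)
      (hindep.integrable_exp_mul_sum hmeas (fun u _ => hint u))
  rw [hindep.mgf_sum hmeas (vFinset v)] at hcher
  have hprod : (∏ u ∈ vFinset v, mgf (E u) P (-θ)) = (la/(la+θ)) ^ (∑ j, (v j:ℕ)) := by
    rw [Finset.prod_congr rfl (fun u _ => hmgf u), Finset.prod_const, card_vFinset]
  rw [hprod, neg_neg] at hcher
  rw [hsetEq]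
  calc P {ω | (∑ u ∈ vFinset v, E u) ω ≤ t'}
      = ENNReal.ofReal (P {ω | (∑ u ∈ vFinset v, E u) ω ≤ t'}).toReal :=
        (ENNReal.ofReal_toReal (measure_ne_top _ _)).symm
    _ ≤ _ := ENNReal.ofReal_le_ofReal hcher

lemma tail_bound (P : Measure Ω) [IsProbabilityMeasure P]
    {la : ℝ} (hla : 0 < la)
    (E : VertexAll → Ω → ℝ) (hmeas : ∀ u, Measurable (E u))
    (hdist : ∀ u, P.map (E u) = expMeasure la)
    (hindep : iIndepFun E P)
    (m : ℕ) (hm : 1 ≤ m) (t : ℝ) (ht : 0 < t) :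
    P {ω | Sstar E m ω ≤ t} ≤ ENNReal.ofReal ((Real.exp 1 * la * t / m) ^ m) := by
  have key : ∀ t' : ℝ, t < t' →
      P {ω | Sstar E m ω ≤ t} ≤ ENNReal.ofReal ((Real.exp 1 * la * t' / m) ^ m) := by
    intro t' htt'
    obtain ⟨k, rfl⟩ : ∃ k, m = k + 1 := ⟨m - 1, (Nat.succ_pred_eq_of_pos hm).symm⟩
    have ht'0 : 0 < t' := ht.trans htt'
    set θ : ℝ := (k+1) / t' with hθdef
    have hθ : 0 < θ := by positivity
    set r : ℝ := la / (la + θ) with hrdef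
    have hr0 : 0 ≤ r := by positivity
    have hr1 : r < 1 := by
      rw [hrdef, div_lt_one (by linarith)]; linarith
    have h1r : 0 < 1 - r := by linarith
    rw [show ((k+1 : ℕ) : ℝ) = (k:ℝ)+1 by push_cast; ring]
    have hsub : {ω | Sstar E (k+1) ω ≤ t} ⊆ ⋃ v : Vertex k, {ω | S E v ω ≤ t'} := by
      intro ω hω
      have h2 : (⨅ v : Vertex k, S E v ω) < t' := lt_of_le_of_lt hω htt'
      obtain ⟨v, hv⟩ := exists_lt_of_ciInf_lt h2
      exact Set.mem_iUnion.mpr ⟨v, hv.le⟩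
    have hterm : ∀ v : Vertex k,
        ENNReal.ofReal (Real.exp (θ * t') * r ^ (∑ j, (v j : ℕ)))
          = ENNReal.ofReal (Real.exp (θ * t')) * ∏ j, (ENNReal.ofReal r) ^ ((v j : ℕ)) := by
      intro v
      rw [ENNReal.ofReal_mul (exp_nonneg _), ENNReal.ofReal_pow hr0,
        ← Finset.prod_pow_eq_pow_sum]
    calc P {ω | Sstar E (k+1) ω ≤ t}
        ≤ P (⋃ v : Vertex k, {ω | S E v ω ≤ t'}) := measure_mono hsub
      _ ≤ ∑' v : Vertex k, P {ω | S E v ω ≤ t'} := measure_iUnion_le _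
      _ ≤ ∑' v : Vertex k, ENNReal.ofReal (Real.exp (θ * t') * r ^ (∑ j, (v j : ℕ))) :=
          ENNReal.tsum_le_tsum (fun v => vertex_bound P hla hθ E hmeas hdist hindep v t')
      _ = ENNReal.ofReal (Real.exp (θ * t')) *
            ∑' v : Vertex k, ∏ j, (ENNReal.ofReal r) ^ ((v j : ℕ)) := by
          simp_rw [hterm]; rw [ENNReal.tsum_mul_left]
      _ = ENNReal.ofReal (Real.exp (θ * t')) *
            ((ENNReal.ofReal r) * (1 - ENNReal.ofReal r)⁻¹) ^ (k+1) := by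
          rw [tsum_pi_pow, tsum_pnat_pow]
      _ = ENNReal.ofReal ((Real.exp 1 * la * t' / (k+1)) ^ (k+1)) := by
          have e1 : (1 : ℝ≥0∞) - ENNReal.ofReal r = ENNReal.ofReal (1 - r) := by
            rw [ENNReal.ofReal_sub _ hr0, ENNReal.ofReal_one]
          rw [e1, ← ENNReal.ofReal_inv_of_pos h1r, ← ENNReal.ofReal_mul hr0,
            ← ENNReal.ofReal_pow (by positivity), ← ENNReal.ofReal_mul (exp_nonneg _)]
          congr 1
          have hθt' : θ * t' = (k+1 : ℝ) := by
            rw [hθdef]; field_simp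
          have hrr : r * (1 - r)⁻¹ = la * t' / (k+1 : ℝ) := by
            rw [hrdef, hθdef]
            have hk1 : ((k:ℝ)+1) ≠ 0 := by positivity
            field_simp
            ring
          rw [hθt', hrr]
          have : Real.exp ((k:ℝ)+1) = Real.exp 1 ^ (k+1) := by
            rw [← Real.exp_nat_mul]; push_cast; ring_nf
          rw [show Real.exp 1 * la * t' / (k+1:ℝ) = Real.exp 1 * (la * t' / (k+1:ℝ)) by ring,
            mul_pow, ← this]
  have cont : Tendsto (fun t' : ℝ => ENNReal.ofReal ((Real.exp 1 * la * t' / m) ^ m))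
      (nhdsWithin t (Set.Ioi t)) (nhds (ENNReal.ofReal ((Real.exp 1 * la * t / m) ^ m))) := by
    apply Tendsto.mono_left _ nhdsWithin_le_nhds
    exact (ENNReal.continuous_ofReal.comp
      (((continuous_const.mul continuous_id).div_const _).pow m)).tendsto t
  refine ge_of_tendsto cont ?_
  filter_upwards [self_mem_nhdsWithin] with t' ht'
  exact key t' ht'


end BRWAux


/-- For every `m ≥ 1` and `t > 0`, the probability that the adversary tree
reaches depth `m` by time `t` satisfies
`P(D_0(t) ≥ m) = P(S*_m ≤ t) ≤ (e λ_a t / m) ^ m`. -/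
theorem adversary_tree_depth_tail_bound
    {Ω : Type*} [MeasurableSpace Ω] (P : Measure Ω) [IsProbabilityMeasure P]
    (lambda_a : ℝ) (hla : 0 < lambda_a)
    (E : VertexAll → Ω → ℝ)
    (hmeas : ∀ v, Measurable (E v))
    (hdist : ∀ v, P.map (E v) = expMeasure lambda_a)
    (hindep : iIndepFun E P)
    (m : ℕ) (hm : 1 ≤ m) (t : ℝ) (ht : 0 < t) :
    P {ω | m ≤ D0 E t ω} = P {ω | Sstar E m ω ≤ t} ∧
      P {ω | Sstar E m ω ≤ t} ≤
        ENNReal.ofReal ((Real.exp 1 * lambda_a * t / m) ^ m) := by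
  have htail : ∀ n : ℕ, 1 ≤ n → P {ω | Sstar E n ω ≤ t} ≤
      ENNReal.ofReal ((Real.exp 1 * lambda_a * t / n) ^ n) :=
    fun n hn => BRWAux.tail_bound P hla E hmeas hdist hindep n hn t ht
  refine ⟨?_, htail m hm⟩
  have hG : ∀ᵐ ω ∂P, ∀ u : VertexAll, 0 ≤ E u ω := by
    rw [ae_all_iff]
    intro u
    have h0 : P {ω | E u ω < 0} = 0 := by
      have h1 : {ω | E u ω < 0} = E u ⁻¹' Set.Iio 0 := rfl
      rw [h1, ← Measure.map_apply (hmeas u) measurableSet_Iio, hdist u,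
        BRWAux.expMeasure_eq'', withDensity_apply _ measurableSet_Iio]
      exact lintegral_exponentialPDF_of_nonpos le_rfl
    rw [ae_iff]
    simpa [not_le] using h0
  have hB : P {ω | ∀ n : ℕ, Sstar E n ω ≤ t} = 0 := by
    set c := Real.exp 1 * lambda_a * t with hc
    have hc0 : 0 < c := by positivity
    have hle : ∀ n : ℕ, 1 ≤ n → P {ω | ∀ j : ℕ, Sstar E j ω ≤ t} ≤
        ENNReal.ofReal ((c / n) ^ n) := fun n hn =>
      (measure_mono fun ω (hω : ∀ j : ℕ, Sstar E j ω ≤ t) => hω n).trans (htail n hn)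
    have h2 : Tendsto (fun n : ℕ => ENNReal.ofReal ((1/2 : ℝ) ^ n)) atTop (nhds 0) := by
      have h3 := tendsto_pow_atTop_nhds_zero_of_lt_one (by norm_num : (0:ℝ) ≤ 1/2)
        (by norm_num : (1/2 : ℝ) < 1)
      have h4 := ENNReal.tendsto_ofReal h3
      simpa using h4
    refine le_antisymm (ge_of_tendsto h2 ?_) zero_le
    filter_upwards [eventually_ge_atTop (max 1 (Nat.ceil (2*c)))] with n hn
    have hn1 : 1 ≤ n := le_trans (le_max_left _ _) hn
    have hn2 : 2*c ≤ (n:ℝ) := le_trans (Nat.le_ceil _)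
      (by exact_mod_cast le_trans (le_max_right _ _) hn)
    refine (hle n hn1).trans (ENNReal.ofReal_le_ofReal ?_)
    apply pow_le_pow_left₀ (by positivity)
    rw [div_le_iff₀ (by positivity : (0:ℝ) < (n:ℝ))]
    linarith
  apply measure_congr
  have hBc : ∀ᵐ ω ∂P, ¬ ∀ n : ℕ, Sstar E n ω ≤ t := by
    rw [ae_iff]
    simpa using hB
  filter_upwards [hG, hBc] with ω hGω hBω
  have hmono := BRWAux.sstar_mono E hGω
  simp only [Set.mem_setOf_eq, eq_iff_iff]
  obtain ⟨N, hN⟩ := not_forall.mp hBω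
  have hbdd : BddAbove {n : ℕ | Sstar E n ω ≤ t} := by
    refine ⟨N, fun n hn => ?_⟩
    by_contra hc2
    exact hN (le_trans (hmono (le_of_not_ge hc2)) hn)
  have h0A : (0:ℕ) ∈ {n : ℕ | Sstar E n ω ≤ t} := by
    show Sstar E 0 ω ≤ t
    simpa [Sstar] using ht.le
  constructor
  · intro hle
    have hsup := Nat.sSup_mem ⟨0, h0A⟩ hbdd
    exact le_trans (hmono hle) hsup
  · intro hle
    exact le_csSup hbdd hle
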